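/- Every group homomorphism from the fundamental group of a closed orientable surface of genus g to the affine group Aff(ℂ) = {z ↦ az + b : a ∈ ℂ*, b ∈ ℂ} lifts to SL(2,ℂ), i.e., composing with the quotient SL(2,ℂ) → PSL(2,ℂ) recovers the embedding Aff(ℂ) ⊂ PSL(2,ℂ). -/

import Mathlib

abbrev SL2C := Matrix.SpecialLinearGroup (Fin 2) ℂ
abbrev PSL2C := SL2C ⧸ Subgroup.center SL2C

open scoped commutatorElement

/-- The surface group relator `∏ i, [aᵢ, bᵢ]`. -/
def surfaceRelator (g : ℕ) : FreeGroup (Fin g ⊕ Fin g) :=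
  (List.ofFn fun i : Fin g =>
    ⁅(FreeGroup.of (Sum.inl i) : FreeGroup (Fin g ⊕ Fin g)), FreeGroup.of (Sum.inr i)⁆).prod

/-- The fundamental group of the closed orientable surface of genus `g`. -/
def SurfaceGroup (g : ℕ) : Type := PresentedGroup ({surfaceRelator g} : Set (FreeGroup (Fin g ⊕ Fin g)))

instance (g : ℕ) : Group (SurfaceGroup g) := by unfold SurfaceGroup; infer_instance

namespace AffLiftAux

lemma det_rel (A : SL2C) :
    (A : Matrix (Fin 2) (Fin 2) ℂ) 0 0 * (A : Matrix (Fin 2) (Fin 2) ℂ) 1 1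
      - (A : Matrix (Fin 2) (Fin 2) ℂ) 0 1 * (A : Matrix (Fin 2) (Fin 2) ℂ) 1 0 = 1 := by
  have := A.property
  rwa [Matrix.det_fin_two] at this

lemma mul10 (A B : SL2C) (hA : (A : Matrix (Fin 2) (Fin 2) ℂ) 1 0 = 0)
    (hB : (B : Matrix (Fin 2) (Fin 2) ℂ) 1 0 = 0) :
    ((A * B : SL2C) : Matrix (Fin 2) (Fin 2) ℂ) 1 0 = 0 := by
  simp [Matrix.mul_apply, Fin.sum_univ_two, hA, hB]

lemma inv10 (A : SL2C) (hA : (A : Matrix (Fin 2) (Fin 2) ℂ) 1 0 = 0) :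
    ((A⁻¹ : SL2C) : Matrix (Fin 2) (Fin 2) ℂ) 1 0 = 0 := by
  rw [Matrix.SpecialLinearGroup.coe_inv, Matrix.adjugate_fin_two]
  simp [hA]

lemma inv00 (A : SL2C) :
    ((A⁻¹ : SL2C) : Matrix (Fin 2) (Fin 2) ℂ) 0 0 = (A : Matrix (Fin 2) (Fin 2) ℂ) 1 1 := by
  rw [Matrix.SpecialLinearGroup.coe_inv, Matrix.adjugate_fin_two]
  simp

lemma mul00 (A B : SL2C) (hB : (B : Matrix (Fin 2) (Fin 2) ℂ) 1 0 = 0) :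
    ((A * B : SL2C) : Matrix (Fin 2) (Fin 2) ℂ) 0 0
      = (A : Matrix (Fin 2) (Fin 2) ℂ) 0 0 * (B : Matrix (Fin 2) (Fin 2) ℂ) 0 0 := by
  simp [Matrix.mul_apply, Fin.sum_univ_two, hB]

/-- Strictly upper triangular unipotent matrices in SL₂(ℂ) form a subgroup. -/
def Usub : Subgroup SL2C where
  carrier := {A | (A : Matrix (Fin 2) (Fin 2) ℂ) 1 0 = 0 ∧
    (A : Matrix (Fin 2) (Fin 2) ℂ) 0 0 = 1}
  one_mem' := by constructor <;> simp
  mul_mem' := by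
    rintro A B ⟨hA10, hA00⟩ ⟨hB10, hB00⟩
    exact ⟨mul10 A B hA10 hB10, by rw [mul00 A B hB10, hA00, hB00, one_mul]⟩
  inv_mem' := by
    rintro A ⟨hA10, hA00⟩
    refine ⟨inv10 A hA10, ?_⟩
    rw [inv00 A]
    have := det_rel A
    rw [hA10, hA00] at this
    linear_combination this

lemma commutator_mem_Usub (A B : SL2C) (hA : (A : Matrix (Fin 2) (Fin 2) ℂ) 1 0 = 0)
    (hB : (B : Matrix (Fin 2) (Fin 2) ℂ) 1 0 = 0) : ⁅A, B⁆ ∈ Usub := by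
  have hAi := inv10 A hA
  have hBi := inv10 B hB
  have hdA := det_rel A
  have hdB := det_rel B
  rw [hA] at hdA; rw [hB] at hdB
  constructor
  · show ((A * B * A⁻¹ * B⁻¹ : SL2C) : Matrix (Fin 2) (Fin 2) ℂ) 1 0 = 0
    exact mul10 _ _ (mul10 _ _ (mul10 _ _ hA hB) hAi) hBi
  · show ((A * B * A⁻¹ * B⁻¹ : SL2C) : Matrix (Fin 2) (Fin 2) ℂ) 0 0 = 1
    rw [mul00 _ _ hBi, mul00 _ _ hAi, mul00 _ _ hB, inv00, inv00]
    linear_combination ((B : Matrix (Fin 2) (Fin 2) ℂ) 0 0 * (B : Matrix (Fin 2) (Fin 2) ℂ) 1 1) * hdA + hdB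

lemma central_unipotent_eq_one (C : SL2C) (hU : C ∈ Usub)
    (hc : C ∈ Subgroup.center SL2C) : C = 1 := by
  obtain ⟨h10, h00⟩ := hU
  have h11 : (C : Matrix (Fin 2) (Fin 2) ℂ) 1 1 = 1 := by
    have := det_rel C
    rw [h10, h00] at this
    linear_combination this
  set w : SL2C := ⟨!![0, -1; 1, 0], by simp [Matrix.det_fin_two]⟩ with hw
  have hcomm : w * C = C * w := Subgroup.mem_center_iff.mp hc w
  have h01 : (C : Matrix (Fin 2) (Fin 2) ℂ) 0 1 = 0 := by
    have := congrArg (fun M : SL2C => (M : Matrix (Fin 2) (Fin 2) ℂ) 1 1) hcomm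
    simp only [Matrix.SpecialLinearGroup.coe_mul] at this
    rw [Matrix.mul_apply, Matrix.mul_apply, Fin.sum_univ_two] at this
    simp [hw, h10, h11] at this
    exact this
  ext i j
  fin_cases i <;> fin_cases j <;>
    simp [h10, h00, h11, h01, Matrix.one_apply]

end AffLiftAux

open AffLiftAux in
/-- Every representation of a closed surface group into `Aff(ℂ) ⊂ PSL(2,ℂ)` (classes of
upper-triangular matrices) lifts to `SL(2,ℂ)`. -/
theorem affine_representation_lifts_to_SL2
    (g : ℕ) (ρ : SurfaceGroup g →* PSL2C)
    (haff : ∀ γ : SurfaceGroup g, ∃ A : SL2C,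
      (A : Matrix (Fin 2) (Fin 2) ℂ) 1 0 = 0 ∧ (QuotientGroup.mk A : PSL2C) = ρ γ) :
    ∃ ρ' : SurfaceGroup g →* SL2C,
      ∀ γ : SurfaceGroup g, (QuotientGroup.mk (ρ' γ) : PSL2C) = ρ γ := by
  set rels : Set (FreeGroup (Fin g ⊕ Fin g)) := {surfaceRelator g} with hrels
  -- chosen lifts of the generators
  set F : Fin g ⊕ Fin g → SL2C :=
    fun x => (haff (PresentedGroup.of (rels := rels) x)).choose with hF
  have hF10 : ∀ x, ((F x : SL2C) : Matrix (Fin 2) (Fin 2) ℂ) 1 0 = 0 :=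
    fun x => (haff (PresentedGroup.of (rels := rels) x)).choose_spec.1
  have hFmk : ∀ x, (QuotientGroup.mk (F x) : PSL2C) = ρ (PresentedGroup.of (rels := rels) x) :=
    fun x => (haff (PresentedGroup.of (rels := rels) x)).choose_spec.2
  -- the projection to the surface group, typed with `SurfaceGroup`
  set mkS : FreeGroup (Fin g ⊕ Fin g) →* SurfaceGroup g := PresentedGroup.mk rels with hmkS
  -- composing with the projections gives the same hom on the free group
  have hhom : (QuotientGroup.mk' (Subgroup.center SL2C)).comp (FreeGroup.lift F)
      = ρ.comp mkS := by
    apply FreeGroup.ext_hom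
    intro x
    simp
    exact hFmk x
  -- the relator maps to 1
  have hrel : ∀ r ∈ rels, FreeGroup.lift F r = 1 := by
    intro r hr
    rw [hrels, Set.mem_singleton_iff] at hr
    subst hr
    -- membership in the unipotent subgroup
    have hU : FreeGroup.lift F (surfaceRelator g) ∈ Usub := by
      rw [surfaceRelator, map_list_prod]
      apply Subgroup.list_prod_mem
      intro x hx
      rw [List.mem_map] at hx
      obtain ⟨y, hy, rfl⟩ := hx
      rw [List.mem_ofFn] at hy
      obtain ⟨i, rfl⟩ := hy
      rw [map_commutatorElement]
      simp only [FreeGroup.lift_apply_of]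
      exact commutator_mem_Usub _ _ (hF10 _) (hF10 _)
    -- centrality
    have hcen : FreeGroup.lift F (surfaceRelator g) ∈ Subgroup.center SL2C := by
      have h1 := congrArg (fun φ : FreeGroup (Fin g ⊕ Fin g) →* PSL2C =>
        φ (surfaceRelator g)) hhom
      simp only [MonoidHom.comp_apply] at h1
      have h2 : mkS (surfaceRelator g) = 1 := by
        rw [hmkS]
        apply (QuotientGroup.eq_one_iff (G := FreeGroup (Fin g ⊕ Fin g)) _).mpr
        exact Subgroup.subset_normalClosure (Set.mem_singleton _)
      rw [h2, map_one] at h1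
      exact (QuotientGroup.eq_one_iff _).mp h1
    exact central_unipotent_eq_one _ hU hcen
  refine ⟨(PresentedGroup.toGroup hrel : PresentedGroup rels →* SL2C), ?_⟩
  intro γ
  obtain ⟨z, rfl⟩ : ∃ z, mkS z = γ := PresentedGroup.mk_surjective rels γ
  have h1 : (PresentedGroup.toGroup hrel : PresentedGroup rels →* SL2C)
      (mkS z) = FreeGroup.lift F z := rfl
  have h2 := congrArg (fun φ : FreeGroup (Fin g ⊕ Fin g) →* PSL2C =>
    φ z) hhom
  simp only [MonoidHom.comp_apply] at h2
  rw [← h2]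
  exact congrArg (QuotientGroup.mk' (Subgroup.center SL2C)) h1
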